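/- There exists a universal constant c > 0 such that for every n ≥ 3 and every j ∈ ZMod n: Σ_{I ∈ 𝓘} Σ_{A ⊆ I} Σ_{k ∈ ZMod n} (v^I_{k+j} − v^I_k)² ≥ c·d_{Cₙ}(0, j)². -/

import Mathlib

open Finset

/-- The cycle metric on `ZMod n`: the least `|a|` over integers `a` with
`a ≡ j - k (mod n)`. -/
noncomputable def cycDist (n : ℕ) (j k : ZMod n) : ℕ :=
  sInf {m : ℕ | ∃ a : ℤ, a.natAbs = m ∧ (a : ZMod n) = j - k}

/-- The arc `{a, a+1, …, a + (⌊n/3⌋ - 1)}` of length `m = ⌊n/3⌋` in `ZMod n`.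
As `a` ranges over `ZMod n` this produces the family `𝓘` of all `n` such arcs. -/
def arc (n : ℕ) (a : ZMod n) : Finset (ZMod n) :=
  (Finset.range (n / 3)).image (fun i : ℕ => a + (i : ZMod n))

/-- distance from a point `k` to the arc starting at `a`: `min_{i ∈ I} d_{Cₙ}(k, i)`. -/
noncomputable def dArc (n : ℕ) (a k : ZMod n) : ℕ :=
  sInf {m : ℕ | ∃ i ∈ arc n a, cycDist n k i = m}

/-- `η = 1 / (n · 2^{n/6})`. -/
noncomputable def eta (n : ℕ) : ℝ := 1 / ((n : ℝ) * (2 : ℝ) ^ ((n : ℝ) / 6))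

/-- `δ = 1 / (√n · 2^{n/6})`. -/
noncomputable def dlt (n : ℕ) : ℝ := 1 / (Real.sqrt n * (2 : ℝ) ^ ((n : ℝ) / 6))

/-- The vector `v^I` attached to the arc `I` starting at `a`:
`v^I_k = η` for `k ∈ I` and `v^I_k = δ·√(d(k, I))` for `k ∉ I`. -/
noncomputable def vI (n : ℕ) (a k : ZMod n) : ℝ :=
  if k ∈ arc n a then eta n else dlt n * Real.sqrt (dArc n a k)

/-! ### Auxiliary lemmas -/

lemma natCast_val_eq (n : ℕ) [NeZero n] (z : ZMod n) : ((z.val : ℕ) : ZMod n) = z := by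
  rw [ZMod.natCast_val, ZMod.cast_id]

lemma cycDist_set_nonempty (n : ℕ) [NeZero n] (x y : ZMod n) :
    {m : ℕ | ∃ a : ℤ, a.natAbs = m ∧ (a : ZMod n) = x - y}.Nonempty :=
  ⟨(x - y).val, ((x - y).val : ℤ), Int.natAbs_natCast _, by
    rw [Int.cast_natCast]; exact natCast_val_eq n _⟩

lemma cycDist_eq (n : ℕ) [NeZero n] (x y : ZMod n) :
    cycDist n x y = min (x - y).val (n - (x - y).val) := by
  unfold cycDist
  set v := (x - y).val with hv
  have hvlt : v < n := ZMod.val_lt _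
  have hiff : ∀ a : ℤ, (a : ZMod n) = x - y ↔ ∃ t : ℤ, a - v = n * t := by
    intro a
    have h1 : x - y = ((v : ℤ) : ZMod n) := by
      rw [Int.cast_natCast]; exact (natCast_val_eq n _).symm
    rw [h1, ZMod.intCast_eq_intCast_iff, Int.modEq_iff_dvd]
    constructor
    · rintro ⟨t, ht⟩; exact ⟨-t, by linarith⟩
    · rintro ⟨t, ht⟩; exact ⟨-t, by linarith⟩
  apply le_antisymm
  · apply Nat.sInf_le
    rcases le_total v (n - v) with h | h
    · rw [min_eq_left h]
      exact ⟨(v : ℤ), Int.natAbs_natCast _, by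
        rw [Int.cast_natCast]; exact natCast_val_eq n _⟩
    · rw [min_eq_right h]
      refine ⟨(v : ℤ) - n, by omega, ?_⟩
      rw [hiff]; exact ⟨-1, by ring⟩
  · obtain ⟨a, hna, hcast⟩ := Nat.sInf_mem (cycDist_set_nonempty n x y)
    obtain ⟨t, ht⟩ := (hiff a).mp hcast
    rw [← hna]
    have key : v ≤ a.natAbs ∨ n - v ≤ a.natAbs := by
      have h1 : t = 0 ∨ 1 ≤ t ∨ t ≤ -1 := by omega
      rcases h1 with h1 | h1 | h1
      · subst h1; left; omega
      · right
        have : (n : ℤ) * 1 ≤ n * t := by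
          apply mul_le_mul_of_nonneg_left h1 (by positivity)
        omega
      · right
        have : (n : ℤ) * t ≤ n * (-1) := by
          apply mul_le_mul_of_nonneg_left h1 (by positivity)
        omega
    rcases le_total v (n - v) with h | h
    · rw [min_eq_left h]; omega
    · rw [min_eq_right h]; omega

lemma cycDist_shift (n : ℕ) (x y c : ZMod n) :
    cycDist n (x + c) (y + c) = cycDist n x y := by
  unfold cycDist
  rw [add_sub_add_right_eq_sub]

lemma mem_arc_shift (n : ℕ) (a x : ZMod n) :
    x + a ∈ arc n a ↔ x ∈ arc n 0 := by
  simp only [arc, mem_image, mem_range]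
  constructor
  · rintro ⟨i, hi, hx⟩
    exact ⟨i, hi, by rw [zero_add]; have := hx; rwa [add_comm a, add_left_inj] at this⟩
  · rintro ⟨i, hi, hx⟩
    rw [zero_add] at hx
    exact ⟨i, hi, by rw [← hx, add_comm]⟩

lemma dArc_shift (n : ℕ) (a x : ZMod n) :
    dArc n a (x + a) = dArc n 0 x := by
  unfold dArc
  congr 1
  ext w
  simp only [Set.mem_setOf_eq]
  constructor
  · rintro ⟨i, hi, hc⟩
    refine ⟨i - a, ?_, ?_⟩
    · rw [← mem_arc_shift n a]; simpa using hi
    · rw [← hc]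
      have h2 := cycDist_shift n x (i - a) a
      rw [sub_add_cancel] at h2
      rw [h2]
  · rintro ⟨i, hi, hc⟩
    refine ⟨i + a, ?_, ?_⟩
    · rwa [mem_arc_shift]
    · rw [cycDist_shift]; exact hc

lemma vI_shift (n : ℕ) (a x : ZMod n) : vI n a (x + a) = vI n 0 x := by
  unfold vI
  rw [dArc_shift]
  by_cases h : x ∈ arc n 0
  · rw [if_pos ((mem_arc_shift n a x).mpr h), if_pos h]
  · rw [if_neg (fun hc => h ((mem_arc_shift n a x).mp hc)), if_neg h]

lemma arc_card (n : ℕ) [NeZero n] (a : ZMod n) :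
    (arc n a).card = n / 3 := by
  rw [arc, Finset.card_image_of_injOn, Finset.card_range]
  intro i hi j hj hij
  simp only [mem_coe, mem_range] at hi hj
  have h1 : (i : ZMod n) = (j : ZMod n) := by
    have := hij
    simpa [add_right_inj] using this
  have hi' : i < n := lt_of_lt_of_le hi (Nat.div_le_self n 3)
  have hj' : j < n := lt_of_lt_of_le hj (Nat.div_le_self n 3)
  have := congrArg ZMod.val h1
  rwa [ZMod.val_cast_of_lt hi', ZMod.val_cast_of_lt hj'] at this

lemma cycDist_cast (n : ℕ) [NeZero n] (p i : ℕ) (hip : i ≤ p) (hpn : p < n) :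
    cycDist n (p : ZMod n) (i : ZMod n) = min (p - i) (n - (p - i)) := by
  rw [cycDist_eq]
  have h1 : (p : ZMod n) - (i : ZMod n) = ((p - i : ℕ) : ZMod n) := by
    rw [Nat.cast_sub hip]
  rw [h1, ZMod.val_cast_of_lt (by omega : p - i < n)]

lemma mem_arc_zero (n : ℕ) (i : ℕ) (hi : i < n / 3) : ((i : ZMod n)) ∈ arc n 0 := by
  simp only [arc, mem_image, mem_range]
  exact ⟨i, hi, by rw [zero_add]⟩

lemma cycDist_self (n : ℕ) [NeZero n] (x : ZMod n) : cycDist n x x = 0 := by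
  rw [cycDist_eq, sub_self, ZMod.val_zero]
  simp

lemma dArc_lb (n : ℕ) [NeZero n] (hn : 3 ≤ n) (k : ZMod n) (D : ℕ)
    (h : ∀ i : ℕ, i < n / 3 → D ≤ cycDist n k (i : ZMod n)) :
    D ≤ dArc n 0 k := by
  have hne : {m : ℕ | ∃ i ∈ arc n 0, cycDist n k i = m}.Nonempty :=
    ⟨cycDist n k ((0 : ℕ) : ZMod n), ((0:ℕ) : ZMod n), mem_arc_zero n 0 (by omega), rfl⟩
  obtain ⟨i, hi, hw⟩ := Nat.sInf_mem hne
  simp only [arc, mem_image, mem_range] at hi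
  obtain ⟨i0, hi0, rfl⟩ := hi
  unfold dArc
  rw [← hw, zero_add]
  exact h i0 hi0

/-! ### Real-number estimates -/

lemma two_rpow_pos (x : ℝ) : (0:ℝ) < (2:ℝ) ^ x := Real.rpow_pos_of_pos (by norm_num) x

lemma sqrt_n_pos (n : ℕ) (hn : 3 ≤ n) : (0:ℝ) < Real.sqrt n :=
  Real.sqrt_pos.mpr (by exact_mod_cast (by omega : 0 < n))

lemma dlt_pos (n : ℕ) (hn : 3 ≤ n) : 0 < dlt n :=
  div_pos one_pos (mul_pos (sqrt_n_pos n hn) (two_rpow_pos _))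

lemma eta_eq (n : ℕ) (hn : 3 ≤ n) : eta n = dlt n / Real.sqrt n := by
  have hs : Real.sqrt n * Real.sqrt n = (n:ℝ) := Real.mul_self_sqrt (by positivity)
  have key : Real.sqrt (n:ℝ) * (2:ℝ)^((n:ℝ)/6) * Real.sqrt (n:ℝ) = (n:ℝ) * (2:ℝ)^((n:ℝ)/6) := by
    rw [mul_comm (Real.sqrt (n:ℝ)) ((2:ℝ)^((n:ℝ)/6)), mul_assoc, hs, mul_comm]
  unfold eta dlt
  rw [div_div, key]

lemma dlt_sq (n : ℕ) (hn : 3 ≤ n) : (dlt n)^2 = 1 / ((n : ℝ) * (2:ℝ) ^ ((n:ℝ)/3)) := by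
  have hs : Real.sqrt n * Real.sqrt n = (n:ℝ) := Real.mul_self_sqrt (by positivity)
  have h2 : (2:ℝ) ^ ((n:ℝ)/6) * (2:ℝ) ^ ((n:ℝ)/6) = (2:ℝ) ^ ((n:ℝ)/3) := by
    rw [← Real.rpow_add (by norm_num)]
    congr 1
    ring
  unfold dlt
  rw [div_pow, one_pow, mul_pow]
  congr 1
  rw [sq, sq, hs, h2]

lemma term_lb (n : ℕ) (hn : 3 ≤ n) (dist : ℕ) (d : ℕ) (h1 : 1 ≤ dist) (h3 : d ≤ 3 * dist) :
    (dlt n)^2 * d / 18 ≤ (dlt n * Real.sqrt dist - eta n)^2 := by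
  set s := Real.sqrt (dist : ℝ) with hsdef
  have hdist1 : (1:ℝ) ≤ (dist:ℝ) := by exact_mod_cast h1
  have hs2 : s^2 = dist := Real.sq_sqrt (by positivity)
  have hs1 : 1 ≤ s := by
    rw [show (1:ℝ) = Real.sqrt 1 from (Real.sqrt_one).symm]
    exact Real.sqrt_le_sqrt hdist1
  have hd3 : (d:ℝ) ≤ 3 * s^2 := by rw [hs2]; exact_mod_cast h3
  have hdp : 0 < dlt n := dlt_pos n hn
  have hsqrt3 : Real.sqrt 3 ≤ Real.sqrt n := Real.sqrt_le_sqrt (by exact_mod_cast hn)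
  have h3s : Real.sqrt 3 ^ 2 = 3 := Real.sq_sqrt (by norm_num)
  have h3pos : (0:ℝ) < Real.sqrt 3 := Real.sqrt_pos.mpr (by norm_num)
  have hlb173 : (1.73:ℝ) ≤ Real.sqrt 3 := by
    nlinarith [h3s, Real.sqrt_nonneg (3:ℝ)]
  have heta : eta n ≤ dlt n / Real.sqrt 3 := by
    rw [eta_eq n hn]
    apply div_le_div_of_nonneg_left hdp.le h3pos hsqrt3
  have heta2 : eta n ≤ dlt n * s / Real.sqrt 3 := by
    apply le_trans heta
    gcongr
    exact le_mul_of_one_le_right hdp.le hs1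
  have hXY : dlt n * s / Real.sqrt 3 = dlt n * s * (1/Real.sqrt 3) := by ring
  have hkey : dlt n * s * (1 - 1 / Real.sqrt 3) ≤ dlt n * s - eta n := by
    have hexp : dlt n * s * (1 - 1/Real.sqrt 3) = dlt n * s - dlt n * s * (1/Real.sqrt 3) := by
      ring
    rw [hexp]
    rw [hXY] at heta2
    linarith
  have hinv : 1/Real.sqrt 3 ≤ 1/(1.73:ℝ) := by
    apply one_div_le_one_div_of_le (by norm_num) hlb173
  have hkeynn : 0 ≤ dlt n * s * (1 - 1 / Real.sqrt 3) := by
    have hds : 0 ≤ dlt n * s := by positivity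
    have : (0:ℝ) ≤ 1 - 1/Real.sqrt 3 := by
      have : (1:ℝ)/1.73 ≤ 1 := by norm_num
      linarith
    nlinarith
  have hsq : (dlt n * s * (1 - 1 / Real.sqrt 3))^2 ≤ (dlt n * s - eta n)^2 :=
    pow_le_pow_left₀ hkeynn hkey 2
  apply le_trans _ hsq
  have hfactor : (1:ℝ)/6 ≤ (1 - 1 / Real.sqrt 3)^2 := by
    have h0 : (0:ℝ) ≤ 1 - 1/1.73 := by norm_num
    have hmono : (1 - 1/(1.73:ℝ))^2 ≤ (1 - 1/Real.sqrt 3)^2 := by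
      apply pow_le_pow_left₀ h0 (by linarith) 2
    nlinarith [hmono]
  have expand : (dlt n * s * (1 - 1 / Real.sqrt 3))^2 = (dlt n)^2 * s^2 * (1 - 1/Real.sqrt 3)^2 := by
    ring
  rw [expand]
  have step : (dlt n)^2 * d / 18 ≤ (dlt n)^2 * s^2 * (1/6) := by
    rw [div_eq_mul_inv]
    nlinarith [sq_nonneg (dlt n), hd3]
  apply le_trans step
  apply mul_le_mul_of_nonneg_left hfactor (by positivity)

/-! ### The main quantitative lemma -/

lemma Q_lb (n : ℕ) [NeZero n] (hn : 3 ≤ n) (d : ℕ) (hd1 : 1 ≤ d) (hd2 : 2 * d ≤ n) :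
    (dlt n)^2 * (d:ℝ)^2 / 36 ≤ ∑ k : ZMod n, (vI n 0 (k + (d : ZMod n)) - vI n 0 k)^2 := by
  set m := n / 3 with hm
  have hm1 : 1 ≤ m := by omega
  have hm3 : 3 * m ≤ n := by omega
  have h2m : d ≤ 2 * m := by omega
  set U := Finset.Icc (d/2 + 1) d with hU
  set f : ℕ → ZMod n := fun u => ((m + u - d - 1 : ℕ) : ZMod n) with hf
  -- the per-term bound
  have hterm : ∀ u ∈ U, (dlt n)^2 * d / 18 ≤ (vI n 0 (f u + (d:ZMod n)) - vI n 0 (f u))^2 := by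
    intro u hu
    rw [hU, Finset.mem_Icc] at hu
    obtain ⟨hu1, hu2⟩ := hu
    set t := m + u - d - 1 with ht
    set p := m + u - 1 with hp
    have ht_lt : t < m := by omega
    have hp_lt : p < n := by omega
    have hcast : f u + (d : ZMod n) = ((p : ℕ) : ZMod n) := by
      rw [hf]
      rw [← Nat.cast_add]
      congr 1
      omega
    have hmemt : f u ∈ arc n 0 := mem_arc_zero n t ht_lt
    set D := min u (n + 1 - (m + d)) with hD
    have hD1 : 1 ≤ D := by
      rw [hD]; omega
    have hD3 : d ≤ 3 * D := by
      rw [hD]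
      rcases Nat.le_total u (n + 1 - (m + d)) with h | h
      · rw [min_eq_left h]; omega
      · rw [min_eq_right h]; omega
    have hdistLB : ∀ i : ℕ, i < m → D ≤ cycDist n (p : ZMod n) (i : ZMod n) := by
      intro i hi
      rw [cycDist_cast n p i (by omega) hp_lt]
      apply le_min
      · calc D ≤ u := min_le_left _ _
          _ ≤ p - i := by omega
      · calc D ≤ n + 1 - (m + d) := min_le_right _ _
          _ ≤ n - (p - i) := by omega
    have hdarc : D ≤ dArc n 0 ((p:ℕ) : ZMod n) := dArc_lb n hn _ D hdistLB
    have hnotmem : ((p:ℕ) : ZMod n) ∉ arc n 0 := by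
      intro hmem
      simp only [arc, mem_image, mem_range] at hmem
      obtain ⟨i0, hi0, heq⟩ := hmem
      rw [zero_add] at heq
      have h0 := hdistLB i0 hi0
      have hz : cycDist n ((p:ℕ) : ZMod n) ((i0:ℕ) : ZMod n) = 0 := by
        rw [heq]; exact cycDist_self n _
      omega
    rw [hcast]
    rw [show vI n 0 ((p:ℕ) : ZMod n) = dlt n * Real.sqrt (dArc n 0 ((p:ℕ):ZMod n)) from
      if_neg hnotmem]
    rw [show vI n 0 (f u) = eta n from if_pos hmemt]
    exact term_lb n hn _ d (by omega) (by omega)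
  -- injectivity of f on U
  have hinj : ∀ a ∈ U, ∀ b ∈ U, f a = f b → a = b := by
    intro a ha b hb hab
    rw [hU, Finset.mem_Icc] at ha hb
    have haa : m + a - d - 1 < n := by omega
    have hbb : m + b - d - 1 < n := by omega
    have := congrArg ZMod.val hab
    rw [hf] at this
    simp only at this
    rw [ZMod.val_cast_of_lt haa, ZMod.val_cast_of_lt hbb] at this
    omega
  -- sum over image
  have himg : ∑ k ∈ U.image f, (vI n 0 (k + (d:ZMod n)) - vI n 0 k)^2
      = ∑ u ∈ U, (vI n 0 (f u + (d:ZMod n)) - vI n 0 (f u))^2 :=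
    Finset.sum_image (fun a ha b hb => hinj a ha b hb)
  have hsub : ∑ k ∈ U.image f, (vI n 0 (k + (d:ZMod n)) - vI n 0 k)^2
      ≤ ∑ k : ZMod n, (vI n 0 (k + (d:ZMod n)) - vI n 0 k)^2 := by
    apply Finset.sum_le_sum_of_subset_of_nonneg (Finset.subset_univ _)
    intro i _ _
    positivity
  have hcard : U.card = d - d / 2 := by
    rw [hU, Nat.card_Icc]
    omega
  have hsum1 : (U.card : ℝ) * ((dlt n)^2 * d / 18)
      ≤ ∑ u ∈ U, (vI n 0 (f u + (d:ZMod n)) - vI n 0 (f u))^2 := by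
    calc (U.card : ℝ) * ((dlt n)^2 * d / 18)
        = ∑ _u ∈ U, (dlt n)^2 * d / 18 := by rw [Finset.sum_const, nsmul_eq_mul]
      _ ≤ _ := Finset.sum_le_sum hterm
  have hhalf : (d : ℝ) / 2 ≤ (U.card : ℝ) := by
    rw [hcard]
    have : d ≤ 2 * (d - d/2) := by omega
    have h2 : (d:ℝ) ≤ 2 * ((d - d/2 : ℕ) : ℝ) := by exact_mod_cast this
    linarith
  have hfinal : (dlt n)^2 * (d:ℝ)^2 / 36 ≤ (U.card : ℝ) * ((dlt n)^2 * d / 18) := by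
    have hnn : (0:ℝ) ≤ (dlt n)^2 * d / 18 := by positivity
    calc (dlt n)^2 * (d:ℝ)^2 / 36 = ((d:ℝ)/2) * ((dlt n)^2 * d / 18) := by ring
      _ ≤ (U.card : ℝ) * ((dlt n)^2 * d / 18) := by
          apply mul_le_mul_of_nonneg_right hhalf hnn
  calc (dlt n)^2 * (d:ℝ)^2 / 36 ≤ (U.card : ℝ) * ((dlt n)^2 * d / 18) := hfinal
    _ ≤ ∑ u ∈ U, (vI n 0 (f u + (d:ZMod n)) - vI n 0 (f u))^2 := hsum1
    _ = ∑ k ∈ U.image f, (vI n 0 (k + (d:ZMod n)) - vI n 0 k)^2 := himg.symm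
    _ ≤ _ := hsub

/-! ### Reduction lemmas -/

lemma Q_translate (n : ℕ) [NeZero n] (a j : ZMod n) :
    ∑ k : ZMod n, (vI n a (k + j) - vI n a k)^2
      = ∑ k : ZMod n, (vI n 0 (k + j) - vI n 0 k)^2 := by
  have h := Equiv.sum_comp (Equiv.addRight a) (fun k : ZMod n => (vI n a (k + j) - vI n a k)^2)
  rw [← h]
  apply Finset.sum_congr rfl
  intro x _
  simp only [Equiv.coe_addRight]
  rw [show x + a + j = (x + j) + a from by ring, vI_shift, vI_shift]

lemma Q_neg (n : ℕ) [NeZero n] (j : ZMod n) :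
    ∑ k : ZMod n, (vI n 0 (k + j) - vI n 0 k)^2
      = ∑ k : ZMod n, (vI n 0 (k + -j) - vI n 0 k)^2 := by
  have h := Equiv.sum_comp (Equiv.addRight j) (fun k : ZMod n => (vI n 0 (k + -j) - vI n 0 k)^2)
  rw [← h]
  apply Finset.sum_congr rfl
  intro x _
  simp only [Equiv.coe_addRight]
  rw [show x + j + -j = x from by ring]
  ring

lemma coeff_lb (n : ℕ) (hn : 3 ≤ n) : (1:ℝ)/2 ≤ (n:ℝ) * 2^(n/3 : ℕ) * (dlt n)^2 := by
  have hmr : (n:ℝ)/3 - 1 ≤ ((n/3 : ℕ) : ℝ) := by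
    have h1 : n ≤ 3 * (n/3) + 3 := by omega
    have h2 : (n:ℝ) ≤ 3 * ((n/3:ℕ):ℝ) + 3 := by exact_mod_cast h1
    linarith
  have hn0 : (n:ℝ) ≠ 0 := by positivity
  have h2a : (2:ℝ)^((n:ℝ)/3) ≠ 0 := (two_rpow_pos _).ne'
  have heq : (n:ℝ) * 2^(n/3 : ℕ) * (dlt n)^2 = (2:ℝ) ^ (((n/3:ℕ):ℝ) - (n:ℝ)/3) := by
    rw [dlt_sq n hn, ← Real.rpow_natCast 2 (n/3), Real.rpow_sub (by norm_num : (0:ℝ) < 2)]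
    field_simp
  rw [heq]
  have h3 : (2:ℝ)^(-1 : ℝ) ≤ 2 ^ (((n/3:ℕ):ℝ) - (n:ℝ)/3) :=
    Real.rpow_le_rpow_of_exponent_le (by norm_num) (by linarith)
  rw [Real.rpow_neg_one] at h3
  linarith [h3]

/-- For every `j`,
`Σ_{I ∈ 𝓘} Σ_{A ⊆ I} Σ_{k ∈ ZMod n} (v^I_{k+j} - v^I_k)² ≥ c·d_{Cₙ}(0,j)²`. -/
theorem sum_vI_shift_sq_ge :
    ∃ c : ℝ, 0 < c ∧
      ∀ (n : ℕ) [NeZero n], 3 ≤ n → ∀ j : ZMod n,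
        c * (cycDist n 0 j : ℝ) ^ 2 ≤
          ∑ a : ZMod n, ∑ _A ∈ (arc n a).powerset, ∑ k : ZMod n,
            (vI n a (k + j) - vI n a k) ^ 2 := by
  refine ⟨1/72, by norm_num, ?_⟩
  intro n inst hn j
  have hQa : ∀ a : ZMod n,
      ∑ _A ∈ (arc n a).powerset, ∑ k : ZMod n, (vI n a (k + j) - vI n a k)^2
      = ((2^(n/3) : ℕ) : ℝ) * ∑ k : ZMod n, (vI n 0 (k + j) - vI n 0 k)^2 := by
    intro a
    rw [Finset.sum_congr rfl (fun A _ => Q_translate n a j), Finset.sum_const,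
      Finset.card_powerset, arc_card, nsmul_eq_mul]
  rw [Finset.sum_congr rfl (fun a _ => hQa a), Finset.sum_const, card_univ, ZMod.card,
    nsmul_eq_mul]
  push_cast
  set Q := ∑ k : ZMod n, (vI n 0 (k + j) - vI n 0 k)^2 with hQdef
  have hQnn : 0 ≤ Q := by
    rw [hQdef]
    apply Finset.sum_nonneg
    intro k _
    positivity
  set d := cycDist n 0 j with hd
  by_cases hd0 : d = 0
  · rw [hd0]
    push_cast
    have h1 : (0:ℝ) ≤ (n:ℝ) * (2^(n/3) * Q) := by positivity
    nlinarith [h1]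
  · -- d ≥ 1 : obtain integer representation
    obtain ⟨a, hna, hcast⟩ := Nat.sInf_mem (cycDist_set_nonempty n 0 j)
    have hna' : a.natAbs = d := hna
    have hd2n : 2 * d ≤ n := by
      have h1 := cycDist_eq n 0 j
      have hvlt : (0 - j).val < n := ZMod.val_lt _
      rw [hd, h1]
      omega
    have hQswap : Q = ∑ k : ZMod n, (vI n 0 (k + (d : ZMod n)) - vI n 0 k)^2 := by
      rcases le_or_gt 0 a with hha | hha
      · have ha' : a = (d : ℤ) := by omega
        have hcd : ((d : ℕ) : ZMod n) = -j := by
          have h0 : ((d:ℤ) : ZMod n) = 0 - j := by rw [← ha']; exact hcast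
          rw [zero_sub] at h0
          exact_mod_cast h0
        have hj : j = -((d : ℕ) : ZMod n) := by rw [hcd, neg_neg]
        rw [hQdef, hj, Q_neg, neg_neg]
      · have ha' : a = -(d : ℤ) := by omega
        have hcd : ((d : ℕ) : ZMod n) = j := by
          have : ((a : ℤ) : ZMod n) = -j := by rw [hcast]; ring
          rw [ha'] at this
          push_cast at this
          linear_combination -this
        rw [hQdef, hcd]
    have hQlb := Q_lb n hn d (by omega) hd2n
    rw [← hQswap] at hQlb
    have hcoeff := coeff_lb n hn
    have hd2nn : (0:ℝ) ≤ (d:ℝ)^2 / 36 := by positivity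
    calc (1:ℝ)/72 * (d:ℝ)^2 = (1/2) * ((d:ℝ)^2/36) := by ring
      _ ≤ ((n:ℝ) * 2^(n/3:ℕ) * (dlt n)^2) * ((d:ℝ)^2/36) :=
          mul_le_mul_of_nonneg_right hcoeff hd2nn
      _ = (n:ℝ) * (2^(n/3:ℕ) * ((dlt n)^2 * (d:ℝ)^2/36)) := by push_cast; ring
      _ ≤ (n:ℝ) * (2^(n/3:ℕ) * Q) := by
          apply mul_le_mul_of_nonneg_left _ (by positivity)
          apply mul_le_mul_of_nonneg_left hQlb (by positivity)
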